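/- arXiv:2409.10137 — 2 statements merged into one kernel-verified Lean document; each statement's English description precedes it below -/
import Mathlib

section
/- Let k be a field of characteristic p > 0, S = k[x_1,…,x_n,y_1,…,y_n], m = (x_1,…,x_n,y_1,…,y_n) the irrelevant maximal ideal, and f = y_1 · f_{1,2} · f_{2,3} ⋯ f_{n−1,n} · x_n, where f_{i,j} = x_i y_j − x_j y_i. Then f^{p−1} ∉ m^{[p]}. -/
set_option linter.unusedSectionVars false


open MvPolynomial

/-! ### Symbolic powers -/

/-- The component of the `m`-th symbolic power of `I` at a prime `p`:
the contraction to `R` of `I^m R_p`. -/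
noncomputable def symbolicComponent {R : Type*} [CommRing R] (I : Ideal R) (m : ℕ)
    (p : Ideal R) (hp : p.IsPrime) : Ideal R :=
  letI := hp
  (Ideal.map (algebraMap R (Localization.AtPrime p)) (I ^ m)).comap
    (algebraMap R (Localization.AtPrime p))

/-- The `m`-th symbolic power of an ideal `I`: the intersection of the contractions
`I^m R_p ∩ R` over all minimal primes `p` of `I`. -/
noncomputable def symbolicPower {R : Type*} [CommRing R] (I : Ideal R) (m : ℕ) : Ideal R :=
  sInf { J : Ideal R | ∃ p : Ideal R, ∃ hp : p ∈ I.minimalPrimes,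
    J = symbolicComponent I m p hp.1.1 }

/-! ### Binomial edge ideals -/

section BEI
variable (k : Type*) [Field k] {n : ℕ}

/-- The variable `x i` of `k[x_1,…,x_n,y_1,…,y_n]`. -/
noncomputable def xv (i : Fin n) : MvPolynomial (Fin n ⊕ Fin n) k := X (Sum.inl i)

/-- The variable `y i` of `k[x_1,…,x_n,y_1,…,y_n]`. -/
noncomputable def yv (i : Fin n) : MvPolynomial (Fin n ⊕ Fin n) k := X (Sum.inr i)

/-- The binomial `f_{i,j} = x_i y_j - x_j y_i`. -/
noncomputable def fb (i j : Fin n) : MvPolynomial (Fin n ⊕ Fin n) k :=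
  xv k i * yv k j - xv k j * yv k i

/-- The binomial edge ideal `J_G ⊆ k[x_1,…,x_n,y_1,…,y_n]` of a finite simple graph `G`
on the vertex set `{1,…,n}`. -/
noncomputable def binomialEdgeIdeal (G : SimpleGraph (Fin n)) :
    Ideal (MvPolynomial (Fin n ⊕ Fin n) k) :=
  Ideal.span { f | ∃ i j : Fin n, G.Adj i j ∧ f = fb k i j }

end BEI

/-! ### Frobenius powers, heights, components -/

/-- The `q`-th Frobenius power `I^{[q]}` of an ideal: the ideal generated by the `q`-th
powers of the elements of `I`. -/
def frobeniusPower {R : Type*} [CommRing R] (I : Ideal R) (q : ℕ) : Ideal R :=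
  Ideal.span ((fun f => f ^ q) '' (I : Set R))

/-- The height of an ideal `I`: the infimum of the heights (in the prime spectrum) of the
minimal primes of `I`.  For a prime ideal this is its usual height. -/
noncomputable def idealHeight {R : Type*} [CommRing R] (I : Ideal R) : ℕ∞ :=
  sInf { h : ℕ∞ | ∃ p : Ideal R, ∃ hp : p ∈ I.minimalPrimes,
    h = Order.height (⟨p, hp.1.1⟩ : PrimeSpectrum R) }

/-- The irrelevant maximal ideal of a polynomial ring, generated by the variables. -/
noncomputable def irrelevantIdeal (k : Type*) [CommSemiring k] (σ : Type*) :
    Ideal (MvPolynomial σ k) :=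
  Ideal.span (Set.range MvPolynomial.X)

/-- The number of connected components of a graph. -/
noncomputable def numComponents {V : Type*} (G : SimpleGraph V) : ℕ :=
  Nat.card G.ConnectedComponent

/-! ### Special elements and the primes p_U(G) -/

section Special
variable (k : Type*) [Field k]

/-- The product `f_{1,2} f_{2,3} ⋯ f_{n-1,n}`. -/
noncomputable def pathProd (n : ℕ) : MvPolynomial (Fin n ⊕ Fin n) k :=
  ∏ i : Fin n, if h : i.val + 1 < n then fb k i ⟨i.val + 1, h⟩ else 1

/-- The element `f = y_1 · f_{1,2} f_{2,3} ⋯ f_{n-1,n} · x_n`. -/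
noncomputable def fSpecial (n : ℕ) (hn : 0 < n) : MvPolynomial (Fin n ⊕ Fin n) k :=
  yv k ⟨0, hn⟩ * pathProd k n * xv k ⟨n - 1, by omega⟩

/-- The element `q = y_1 · f_{2,3} f_{3,4} ⋯ f_{n-1,n} · x_n`. -/
noncomputable def qSpecial (n : ℕ) (hn : 0 < n) : MvPolynomial (Fin n ⊕ Fin n) k :=
  yv k ⟨0, hn⟩ *
    (∏ i : Fin n, if h : 1 ≤ i.val ∧ i.val + 1 < n then fb k i ⟨i.val + 1, h.2⟩ else 1) *
    xv k ⟨n - 1, by omega⟩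

/-- The prime ideal `p_U(G) = ({x_i, y_i : i ∈ U}) + J_{K(V(G_1))} + ⋯ + J_{K(V(G_c))}`,
where `G_1,…,G_c` are the connected components of the induced subgraph of `G` on the
complement of `U` and `K(V(G_i))` is the complete graph on the vertices of `G_i`. -/
noncomputable def pUIdeal {n : ℕ} (G : SimpleGraph (Fin n)) (U : Set (Fin n)) :
    Ideal (MvPolynomial (Fin n ⊕ Fin n) k) :=
  Ideal.span
    ({ f | ∃ i ∈ U, f = xv k i ∨ f = yv k i } ∪
      { f | ∃ u v : Fin n, ∃ hu : u ∈ Uᶜ, ∃ hv : v ∈ Uᶜ, u ≠ v ∧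
          (G.induce Uᶜ).Reachable ⟨u, hu⟩ ⟨v, hv⟩ ∧ f = fb k u v })

end Special



open MvPolynomial

namespace FrobAux

variable {σ : Type*} {R : Type*} [CommRing R] [DecidableEq σ]

/-- `d₀` strictly dominates every other monomial of `g` with respect to weight `w`. -/
def IsTop (w : σ → ℕ) (g : MvPolynomial σ R) (d₀ : σ →₀ ℕ) : Prop :=
  ∀ d ∈ g.support, d = d₀ ∨ Finsupp.weight w d < Finsupp.weight w d₀

theorem weight_single_one (w : σ → ℕ) (s : σ) :
    Finsupp.weight w (Finsupp.single s 1) = w s := by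
  rw [Finsupp.weight_apply, Finsupp.sum_single_index]
  · rw [one_smul]
  · rw [zero_smul]

theorem isTop_one (w : σ → ℕ) : IsTop w (1 : MvPolynomial σ R) 0 := by
  classical
  intro d hd
  left
  rw [MvPolynomial.mem_support_iff, MvPolynomial.coeff_one] at hd
  split at hd
  · exact (by assumption : (0 : σ →₀ ℕ) = d).symm
  · exact absurd rfl hd

theorem isTop_X (w : σ → ℕ) (s : σ) :
    IsTop w (X s : MvPolynomial σ R) (Finsupp.single s 1) := by
  classical
  intro d hd
  left
  rw [MvPolynomial.mem_support_iff, MvPolynomial.coeff_X'] at hd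
  split at hd
  · exact (by assumption : Finsupp.single s 1 = d).symm
  · exact absurd rfl hd

theorem isTop_mul {w : σ → ℕ} {g h : MvPolynomial σ R} {d₀ e₀ : σ →₀ ℕ}
    (hg : IsTop w g d₀) (hh : IsTop w h e₀) :
    IsTop w (g * h) (d₀ + e₀) ∧
      MvPolynomial.coeff (d₀ + e₀) (g * h) =
        MvPolynomial.coeff d₀ g * MvPolynomial.coeff e₀ h := by
  classical
  constructor
  · intro d hd
    obtain ⟨a, ha, b, hb, rfl⟩ := Finset.mem_add.mp (MvPolynomial.support_mul g h hd)
    rcases hg a ha with rfl | ha'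
    · rcases hh b hb with rfl | hb'
      · exact Or.inl rfl
      · exact Or.inr (by simpa [map_add] using add_lt_add_left hb' (Finsupp.weight w a))
    · rcases hh b hb with rfl | hb'
      · exact Or.inr (by simpa [map_add] using add_lt_add_right ha' (Finsupp.weight w b))
      · exact Or.inr (by simpa [map_add] using add_lt_add ha' hb')
  · rw [MvPolynomial.coeff_mul]
    refine Finset.sum_eq_single_of_mem (d₀, e₀) (Finset.HasAntidiagonal.mem_antidiagonal.mpr rfl) ?_
    intro x hx hne
    by_contra hzero
    have h1 : MvPolynomial.coeff x.1 g ≠ 0 := left_ne_zero_of_mul hzero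
    have h2 : MvPolynomial.coeff x.2 h ≠ 0 := right_ne_zero_of_mul hzero
    have hx' : x.1 + x.2 = d₀ + e₀ := Finset.HasAntidiagonal.mem_antidiagonal.mp hx
    rcases hg x.1 (MvPolynomial.mem_support_iff.mpr h1) with h3 | h3
    · apply hne
      have : x.2 = e₀ := by
        rw [h3] at hx'
        exact add_left_cancel hx'
      exact Prod.ext h3 this
    · rcases hh x.2 (MvPolynomial.mem_support_iff.mpr h2) with h4 | h4
      · apply hne
        have : x.1 = d₀ := by
          rw [h4] at hx'
          exact add_right_cancel hx'
        exact Prod.ext this h4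
      · have hsum : Finsupp.weight w x.1 + Finsupp.weight w x.2 =
            Finsupp.weight w d₀ + Finsupp.weight w e₀ := by
          rw [← map_add, ← map_add, hx']
        exact absurd hsum (ne_of_lt (add_lt_add h3 h4))

theorem isTop_prod {ι : Type*} (w : σ → ℕ) (s : Finset ι) (g : ι → MvPolynomial σ R)
    (d : ι → (σ →₀ ℕ)) (h : ∀ i ∈ s, IsTop w (g i) (d i)) :
    IsTop w (∏ i ∈ s, g i) (∑ i ∈ s, d i) ∧
      MvPolynomial.coeff (∑ i ∈ s, d i) (∏ i ∈ s, g i) =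
        ∏ i ∈ s, MvPolynomial.coeff (d i) (g i) := by
  classical
  induction s using Finset.cons_induction with
  | empty => exact ⟨by simpa using isTop_one w, by simp⟩
  | cons a s ha ih =>
    rw [Finset.prod_cons, Finset.sum_cons, Finset.prod_cons]
    have ih' := ih (fun i hi => h i (Finset.mem_cons_of_mem hi))
    have key := isTop_mul (h a (Finset.mem_cons_self a s)) ih'.1
    exact ⟨key.1, by rw [key.2, ih'.2]⟩

theorem isTop_pow {w : σ → ℕ} {g : MvPolynomial σ R} {d₀ : σ →₀ ℕ}
    (hg : IsTop w g d₀) (m : ℕ) :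
    IsTop w (g ^ m) (m • d₀) ∧
      MvPolynomial.coeff (m • d₀) (g ^ m) = (MvPolynomial.coeff d₀ g) ^ m := by
  induction m with
  | zero => exact ⟨by simpa using isTop_one w, by simp⟩
  | succ m ih =>
    rw [pow_succ, succ_nsmul, pow_succ]
    have key := isTop_mul ih.1 hg
    exact ⟨key.1, by rw [key.2, ih.2]⟩

end FrobAux

namespace FrobAux

/-- The weight function used for the leading-monomial argument. -/
def wSpec (n : ℕ) : Fin n ⊕ Fin n → ℕ := Sum.elim (fun i => n - i.val) (fun i => i.val)

/-- The top monomial of the `i`-th factor of `pathProd`. -/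
noncomputable def DSpec (n : ℕ) (i : Fin n) : (Fin n ⊕ Fin n) →₀ ℕ :=
  if h : i.val + 1 < n then
    Finsupp.single (Sum.inl i) 1 + Finsupp.single (Sum.inr ⟨i.val + 1, h⟩) 1
  else 0

theorem isTop_fb {k : Type*} [Field k] {n : ℕ} (w : Fin n ⊕ Fin n → ℕ) (i j : Fin n)
    (hij : j ≠ i)
    (hw : w (Sum.inl j) + w (Sum.inr i) < w (Sum.inl i) + w (Sum.inr j)) :
    IsTop w (fb k i j) (Finsupp.single (Sum.inl i) 1 + Finsupp.single (Sum.inr j) 1) ∧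
      MvPolynomial.coeff (Finsupp.single (Sum.inl i) 1 + Finsupp.single (Sum.inr j) 1)
        (fb k i j) = 1 := by
  classical
  set D₁ : (Fin n ⊕ Fin n) →₀ ℕ :=
    Finsupp.single (Sum.inl i) 1 + Finsupp.single (Sum.inr j) 1 with hD₁
  set D₂ : (Fin n ⊕ Fin n) →₀ ℕ :=
    Finsupp.single (Sum.inl j) 1 + Finsupp.single (Sum.inr i) 1 with hD₂
  have hX : ∀ a b : Fin n ⊕ Fin n, (X a * X b : MvPolynomial (Fin n ⊕ Fin n) k) =
      monomial (Finsupp.single a 1 + Finsupp.single b 1) 1 := by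
    intro a b
    rw [show (X a : MvPolynomial (Fin n ⊕ Fin n) k) = monomial (Finsupp.single a 1) 1 by
        rw [← X_pow_eq_monomial, pow_one],
      show (X b : MvPolynomial (Fin n ⊕ Fin n) k) = monomial (Finsupp.single b 1) 1 by
        rw [← X_pow_eq_monomial, pow_one], monomial_mul, one_mul]
  have hfb : fb k i j = monomial D₁ 1 - monomial D₂ 1 := by
    rw [fb, xv, xv, yv, yv, hX, hX]
  have hne : D₂ ≠ D₁ := by
    intro hEq
    have h0 := DFunLike.congr_fun hEq (Sum.inl i)
    simp [hD₁, hD₂, Finsupp.single_apply, hij] at h0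
  have hco : ∀ d, MvPolynomial.coeff d (fb k i j) =
      (if D₁ = d then (1 : k) else 0) - (if D₂ = d then 1 else 0) := by
    intro d
    rw [hfb, MvPolynomial.coeff_sub, MvPolynomial.coeff_monomial, MvPolynomial.coeff_monomial]
  constructor
  · intro d hd
    rw [MvPolynomial.mem_support_iff, hco] at hd
    by_cases h1 : D₁ = d
    · exact Or.inl h1.symm
    · right
      have h2 : D₂ = d := by
        by_contra h2
        rw [if_neg h1, if_neg h2, sub_zero] at hd
        exact hd rfl
      subst h2
      simp only [hD₁, hD₂, map_add, weight_single_one]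
      exact hw
  · rw [hco, if_pos rfl, if_neg hne, sub_zero]

end FrobAux

/-- In `S = k[x_1,…,x_n,y_1,…,y_n]` over a field of characteristic
`p > 0`, the element `f = y_1 · f_{1,2} f_{2,3} ⋯ f_{n-1,n} · x_n` satisfies
`f^{p-1} ∉ m^{[p]}`, where `m` is the irrelevant maximal ideal. -/
theorem fSpecial_pow_not_mem_frobeniusPower
    {k : Type*} [Field k] (p : ℕ) (hp : p.Prime) [CharP k p]
    {n : ℕ} (hn : 0 < n) :
    fSpecial k n hn ^ (p - 1) ∉
      frobeniusPower (irrelevantIdeal k (Fin n ⊕ Fin n)) p := by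
  classical
  haveI : Fact p.Prime := ⟨hp⟩
  intro hmem
  set σ := (Fin n ⊕ Fin n)
  -- Step 1: the Frobenius power is contained in the monomial ideal generated by the `X s ^ p`.
  have hsub : frobeniusPower (irrelevantIdeal k σ) p ≤
      Ideal.span ((fun d => monomial d (1 : k)) ''
        Set.range (fun s : σ => Finsupp.single s p)) := by
    rw [frobeniusPower, Ideal.span_le]
    rintro _ ⟨g, hg, rfl⟩
    show g ^ p ∈ _
    rw [show g ^ p = frobenius (MvPolynomial σ k) p g from rfl]
    have h2 : frobenius (MvPolynomial σ k) p g ∈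
        Ideal.map (frobenius (MvPolynomial σ k) p) (irrelevantIdeal k σ) :=
      Ideal.mem_map_of_mem _ hg
    rw [irrelevantIdeal, Ideal.map_span] at h2
    refine Ideal.span_mono ?_ h2
    rintro _ ⟨_, ⟨s, rfl⟩, rfl⟩
    exact ⟨Finsupp.single s p, ⟨s, rfl⟩, by rw [frobenius_def, X_pow_eq_monomial]⟩
  -- Step 2: leading monomial analysis.
  set z : Fin n := ⟨0, hn⟩ with hz
  set l : Fin n := ⟨n - 1, by omega⟩ with hl
  set d₀ : σ →₀ ℕ :=
    Finsupp.single (Sum.inr z) 1 + (∑ i : Fin n, FrobAux.DSpec n i) +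
      Finsupp.single (Sum.inl l) 1 with hd₀def
  have hfac : ∀ i : Fin n,
      FrobAux.IsTop (FrobAux.wSpec n)
        (if h : i.val + 1 < n then fb k i ⟨i.val + 1, h⟩ else 1) (FrobAux.DSpec n i) ∧
      MvPolynomial.coeff (FrobAux.DSpec n i)
        (if h : i.val + 1 < n then fb k i ⟨i.val + 1, h⟩ else 1) = 1 := by
    intro i
    rw [FrobAux.DSpec]
    split_ifs with h
    · refine FrobAux.isTop_fb (FrobAux.wSpec n) i ⟨i.val + 1, h⟩
        (by rw [Ne, Fin.ext_iff]; simp) ?_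
      show (n - (i.val + 1)) + i.val < (n - i.val) + (i.val + 1)
      omega
    · exact ⟨by simpa using FrobAux.isTop_one (FrobAux.wSpec n), by simp⟩
  have htopP := FrobAux.isTop_prod (FrobAux.wSpec n) Finset.univ
      (fun i : Fin n => if h : i.val + 1 < n then fb k i ⟨i.val + 1, h⟩ else 1)
      (FrobAux.DSpec n) (fun i _ => (hfac i).1)
  have hf : fSpecial k n hn =
      X (Sum.inr z) * (∏ i : Fin n, if h : i.val + 1 < n then fb k i ⟨i.val + 1, h⟩ else 1) *
        X (Sum.inl l) := rfl
  have h1 := FrobAux.isTop_mul (FrobAux.isTop_X (FrobAux.wSpec n) (Sum.inr z)) htopP.1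
  have h2 := FrobAux.isTop_mul h1.1 (FrobAux.isTop_X (FrobAux.wSpec n) (Sum.inl l))
  have htopf : FrobAux.IsTop (FrobAux.wSpec n) (fSpecial k n hn) d₀ := by
    rw [hf, hd₀def]; exact h2.1
  have hcof : MvPolynomial.coeff d₀ (fSpecial k n hn) = 1 := by
    rw [hf, hd₀def, h2.2, h1.2, htopP.2]
    rw [MvPolynomial.coeff_X, MvPolynomial.coeff_X, Finset.prod_congr rfl
      (fun i _ => (hfac i).2)]
    simp
  have hcoeff : MvPolynomial.coeff ((p - 1) • d₀) (fSpecial k n hn ^ (p - 1)) = 1 := by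
    rw [(FrobAux.isTop_pow htopf (p - 1)).2, hcof, one_pow]
  -- Step 3: `d₀` has all its entries at most 1.
  have hDinl : ∀ (i j : Fin n), (FrobAux.DSpec n i) (Sum.inl j) =
      if i = j then (if j.val + 1 < n then 1 else 0) else 0 := by
    intro i j
    rw [FrobAux.DSpec]
    rcases eq_or_ne i j with rfl | hne
    · by_cases h : i.val + 1 < n
      · rw [dif_pos h, if_pos rfl, if_pos h]
        simp [Finsupp.single_apply]
      · rw [dif_neg h, if_pos rfl, if_neg h]
        simp
    · rw [if_neg hne]
      by_cases h : i.val + 1 < n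
      · rw [dif_pos h]
        simp [Finsupp.single_apply, hne]
      · rw [dif_neg h]
        simp
  have hDinr : ∀ (i j : Fin n), (FrobAux.DSpec n i) (Sum.inr j) =
      if i.val + 1 = j.val then 1 else 0 := by
    intro i j
    rw [FrobAux.DSpec]
    by_cases h : i.val + 1 < n
    · rw [dif_pos h, Finsupp.add_apply]
      have h0 : Finsupp.single (Sum.inl i) (1 : ℕ) (Sum.inr j) = 0 := by
        simp [Finsupp.single_apply]
      rw [h0, zero_add]
      rcases eq_or_ne (i.val + 1) j.val with he | hne
      · rw [if_pos he]
        have hrw : (Sum.inr (⟨i.val + 1, h⟩ : Fin n) : Fin n ⊕ Fin n) = Sum.inr j := by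
          rw [Sum.inr.injEq, Fin.ext_iff]
          exact he
        rw [hrw, Finsupp.single_eq_same]
      · rw [if_neg hne]
        apply Finsupp.single_eq_of_ne'
        rw [Ne, Sum.inr.injEq, Fin.ext_iff]
        exact hne
    · rw [dif_neg h]
      have hj := j.isLt
      rw [if_neg (by omega), Finsupp.coe_zero, Pi.zero_apply]
  have hb : ∀ s : σ, d₀ s ≤ 1 := by
    intro s
    have happ : d₀ s = Finsupp.single (Sum.inr z) 1 s +
        (∑ i : Fin n, (FrobAux.DSpec n i) s) + Finsupp.single (Sum.inl l) 1 s := by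
      rw [hd₀def, Finsupp.add_apply, Finsupp.add_apply, Finsupp.finset_sum_apply]
    rcases s with j | j
    · have hy : Finsupp.single (Sum.inr z : Fin n ⊕ Fin n) (1 : ℕ) (Sum.inl j) = 0 := by
        simp [Finsupp.single_apply]
      have hx : Finsupp.single (Sum.inl l : Fin n ⊕ Fin n) (1 : ℕ) (Sum.inl j) = if l = j then 1 else 0 := by
        simp [Finsupp.single_apply]
      have hsum : (∑ i : Fin n, (FrobAux.DSpec n i) (Sum.inl j)) =
          if j.val + 1 < n then 1 else 0 := by
        rw [Finset.sum_congr rfl (fun i _ => hDinl i j)]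
        simp
      rw [happ, hy, hx, hsum]
      have hlval : l.val = n - 1 := rfl
      rcases eq_or_ne l j with rfl | hlj
      · rw [if_pos rfl, if_neg (by omega)]
      · rw [if_neg hlj]
        split_ifs <;> omega
    · have hy : Finsupp.single (Sum.inr z : Fin n ⊕ Fin n) (1 : ℕ) (Sum.inr j) = if z = j then 1 else 0 := by
        simp [Finsupp.single_apply]
      have hx : Finsupp.single (Sum.inl l : Fin n ⊕ Fin n) (1 : ℕ) (Sum.inr j) = 0 := by
        simp [Finsupp.single_apply]
      have hzval : z.val = 0 := rfl
      rw [happ, hy, hx, Finset.sum_congr rfl (fun i _ => hDinr i j)]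
      by_cases hj : j.val = 0
      · have hall : ∀ i : Fin n, ¬(i.val + 1 = j.val) := by intro i; omega
        rw [Finset.sum_congr rfl (fun i _ => if_neg (hall i))]
        simp only [Finset.sum_const_zero, add_zero, zero_add]
        split_ifs <;> omega
      · have hzj : z ≠ j := by
          intro he
          exact hj (by rw [← he])
        have hcond : ∀ i : Fin n, (i.val + 1 = j.val) ↔ (i = ⟨j.val - 1, by omega⟩) := by
          intro i
          rw [Fin.ext_iff]
          constructor <;> (intro h; simp at h ⊢; omega)
        rw [Finset.sum_congr rfl (fun i _ => if_congr (hcond i) rfl rfl)]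
        rw [if_neg hzj]
        simp
  -- Step 4: contradiction.
  have hmem2 := hsub hmem
  rw [MvPolynomial.mem_ideal_span_monomial_image] at hmem2
  obtain ⟨si, ⟨s, rfl⟩, hle⟩ := hmem2 ((p - 1) • d₀)
    (MvPolynomial.mem_support_iff.mpr (by rw [hcoeff]; exact one_ne_zero))
  have hps : p ≤ ((p - 1) • d₀) s := by
    have := Finsupp.le_def.mp hle s
    rwa [Finsupp.single_eq_same] at this
  have hub : ((p - 1) • d₀) s ≤ p - 1 := by
    rw [Finsupp.smul_apply, smul_eq_mul]
    calc (p - 1) * d₀ s ≤ (p - 1) * 1 := Nat.mul_le_mul_left _ (hb s)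
      _ = p - 1 := mul_one _
  have hppos := hp.pos
  omega
end

section
/- Let k be a field and G a finite simple graph on the vertex set {1,…,n}. Then the binomial edge ideal satisfies J_G = ⋂_{U ⊆ {1,…,n}} p_U(G). -/
open MvPolynomial

section Aux
variable {k : Type*} [Field k] {n : ℕ}
noncomputable def killv (v : Fin n) :
    MvPolynomial (Fin n ⊕ Fin n) k →ₐ[k] MvPolynomial (Fin n ⊕ Fin n) k :=
  aeval (fun s => if s = Sum.inl v ∨ s = Sum.inr v then 0 else X s)
variable {v : Fin n}
lemma killv_xv_self : killv (k := k) v (xv k v) = 0 := by simp [killv, xv]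
lemma killv_yv_self : killv (k := k) v (yv k v) = 0 := by simp [killv, yv]
lemma killv_xv {i : Fin n} (h : i ≠ v) : killv (k := k) v (xv k i) = xv k i := by
  simp [killv, xv, h]
lemma killv_yv {i : Fin n} (h : i ≠ v) : killv (k := k) v (yv k i) = yv k i := by
  simp [killv, yv, h]
lemma killv_fb {a b : Fin n} (ha : a ≠ v) (hb : b ≠ v) :
    killv (k := k) v (fb k a b) = fb k a b := by
  simp [fb, map_sub, map_mul, killv_xv ha, killv_xv hb, killv_yv ha, killv_yv hb]
lemma sub_killv_mem (f : MvPolynomial (Fin n ⊕ Fin n) k) :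
    f - killv (k := k) v f ∈ Ideal.span {xv k v, yv k v} := by
  induction f using MvPolynomial.induction_on with
  | C a => simp [killv]
  | add p q hp hq =>
    have : p + q - killv (k := k) v (p + q) = (p - killv v p) + (q - killv v q) := by
      rw [map_add]; ring
    rw [this]; exact add_mem hp hq
  | mul_X p s hp =>
    rw [map_mul, killv, aeval_X, ← killv]
    by_cases hs : s = Sum.inl v ∨ s = Sum.inr v
    · rw [if_pos hs, mul_zero, sub_zero]
      rcases hs with rfl | rfl
      · exact Ideal.mul_mem_left _ _ (Ideal.subset_span (by left; rfl))
      · exact Ideal.mul_mem_left _ _ (Ideal.subset_span (by right; rfl))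
    · rw [if_neg hs]
      have : p * X s - killv (k := k) v p * X s = (p - killv v p) * X s := by ring
      rw [this]
      exact Ideal.mul_mem_right _ _ hp
end Aux

/-! ### graph operations -/
section Graphs
variable {n : ℕ}

/-- Complete the neighborhood of `v`. -/
def extG (G : SimpleGraph (Fin n)) (v : Fin n) : SimpleGraph (Fin n) where
  Adj a b := G.Adj a b ∨ (a ≠ b ∧ G.Adj v a ∧ G.Adj v b)
  symm := by
    constructor
    intro a b h
    rcases h with h | ⟨hne, ha, hb⟩
    · exact Or.inl h.symm
    · exact Or.inr ⟨hne.symm, hb, ha⟩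
  loopless := by
    constructor
    intro a h
    rcases h with h | ⟨hne, _, _⟩
    · exact G.loopless.irrefl a h
    · exact hne rfl

/-- Delete all edges at `v`. -/
def delG (G : SimpleGraph (Fin n)) (v : Fin n) : SimpleGraph (Fin n) where
  Adj a b := G.Adj a b ∧ a ≠ v ∧ b ≠ v
  symm := by constructor; intro a b ⟨h, ha, hb⟩; exact ⟨h.symm, hb, ha⟩
  loopless := by constructor; intro a ⟨h, _, _⟩; exact G.loopless.irrefl a h

lemma le_extG {G : SimpleGraph (Fin n)} {v : Fin n} : G ≤ extG G v := fun _ _ h => Or.inl h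
lemma delG_le {G : SimpleGraph (Fin n)} {v : Fin n} : delG G v ≤ G := fun _ _ h => h.1

lemma extG_walk_reachable {G : SimpleGraph (Fin n)} {v : Fin n} {a b : Fin n}
    (p : (extG G v).Walk a b) : G.Reachable a b := by
  induction p with
  | nil => exact SimpleGraph.Reachable.refl _
  | cons h _ ih =>
    refine SimpleGraph.Reachable.trans ?_ ih
    rcases h with h | ⟨_, ha, hb⟩
    · exact h.reachable
    · exact ha.symm.reachable.trans hb.reachable

lemma extG_reachable {G : SimpleGraph (Fin n)} {v : Fin n} {a b : Fin n} :
    (extG G v).Reachable a b ↔ G.Reachable a b :=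
  ⟨fun ⟨p⟩ => extG_walk_reachable p, fun h => h.mono le_extG⟩

end Graphs

/-! ### algebraic lemmas about binomial edge ideals -/
section Alg
variable {k : Type*} [Field k] {n : ℕ} {G : SimpleGraph (Fin n)} {v : Fin n}

lemma J_mono {G G' : SimpleGraph (Fin n)} (h : G ≤ G') :
    binomialEdgeIdeal k G ≤ binomialEdgeIdeal k G' := by
  apply Ideal.span_mono
  rintro f ⟨i, j, hij, rfl⟩
  exact ⟨i, j, h hij, rfl⟩

/-- The "neighborhood" ideal: span of `f_{ab}` for `a, b` neighbors of `v`. -/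
noncomputable def nbQ (k : Type*) [Field k] (G : SimpleGraph (Fin n)) (v : Fin n) :
    Ideal (MvPolynomial (Fin n ⊕ Fin n) k) :=
  Ideal.span { f | ∃ a b : Fin n, G.Adj v a ∧ G.Adj v b ∧ a ≠ b ∧ f = fb k a b }

lemma J_extG_eq : binomialEdgeIdeal k (extG G v) = binomialEdgeIdeal k G ⊔ nbQ k G v := by
  unfold binomialEdgeIdeal nbQ
  rw [← Ideal.span_union]
  congr 1
  ext f
  constructor
  · rintro ⟨i, j, hij | ⟨hne, hi, hj⟩, rfl⟩
    · exact Or.inl ⟨i, j, hij, rfl⟩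
    · exact Or.inr ⟨i, j, hi, hj, hne, rfl⟩
  · rintro (⟨i, j, hij, rfl⟩ | ⟨a, b, ha, hb, hne, rfl⟩)
    · exact ⟨i, j, Or.inl hij, rfl⟩
    · exact ⟨a, b, Or.inr ⟨hne, ha, hb⟩, rfl⟩

lemma xv_mul_fb_mem {a b : Fin n} (ha : G.Adj v a) (hb : G.Adj v b) :
    xv k v * fb k a b ∈ binomialEdgeIdeal k G := by
  have key : xv k v * fb k a b = xv k b * fb k a v + xv k a * fb k v b := by
    unfold fb xv yv; ring
  rw [key]
  exact add_mem
    (Ideal.mul_mem_left _ _ (Ideal.subset_span ⟨a, v, ha.symm, rfl⟩))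
    (Ideal.mul_mem_left _ _ (Ideal.subset_span ⟨v, b, hb, rfl⟩))

lemma yv_mul_fb_mem {a b : Fin n} (ha : G.Adj v a) (hb : G.Adj v b) :
    yv k v * fb k a b ∈ binomialEdgeIdeal k G := by
  have key : yv k v * fb k a b = yv k a * fb k v b + yv k b * fb k a v := by
    unfold fb xv yv; ring
  rw [key]
  exact add_mem
    (Ideal.mul_mem_left _ _ (Ideal.subset_span ⟨v, b, hb, rfl⟩))
    (Ideal.mul_mem_left _ _ (Ideal.subset_span ⟨a, v, ha.symm, rfl⟩))

lemma xv_mul_nbQ_mem {q : MvPolynomial (Fin n ⊕ Fin n) k} (hq : q ∈ nbQ k G v) :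
    xv k v * q ∈ binomialEdgeIdeal k G := by
  induction hq using Submodule.span_induction with
  | mem x h =>
    obtain ⟨a, b, ha, hb, _, rfl⟩ := h
    exact xv_mul_fb_mem ha hb
  | zero => simp
  | add x y hx hy ihx ihy => rw [mul_add]; exact add_mem ihx ihy
  | smul a x hx ih =>
    rw [smul_eq_mul, mul_left_comm]
    exact Ideal.mul_mem_left _ _ ih

lemma yv_mul_nbQ_mem {q : MvPolynomial (Fin n ⊕ Fin n) k} (hq : q ∈ nbQ k G v) :
    yv k v * q ∈ binomialEdgeIdeal k G := by
  induction hq using Submodule.span_induction with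
  | mem x h =>
    obtain ⟨a, b, ha, hb, _, rfl⟩ := h
    exact yv_mul_fb_mem ha hb
  | zero => simp
  | add x y hx hy ihx ihy => rw [mul_add]; exact add_mem ihx ihy
  | smul a x hx ih =>
    rw [smul_eq_mul, mul_left_comm]
    exact Ideal.mul_mem_left _ _ ih

lemma spanxy_mul_nbQ_mem {d q : MvPolynomial (Fin n ⊕ Fin n) k}
    (hd : d ∈ Ideal.span {xv k v, yv k v}) (hq : q ∈ nbQ k G v) :
    d * q ∈ binomialEdgeIdeal k G := by
  obtain ⟨a, b, rfl⟩ := Ideal.mem_span_pair.mp hd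
  have : (a * xv k v + b * yv k v) * q = a * (xv k v * q) + b * (yv k v * q) := by ring
  rw [this]
  exact add_mem (Ideal.mul_mem_left _ _ (xv_mul_nbQ_mem hq))
    (Ideal.mul_mem_left _ _ (yv_mul_nbQ_mem hq))

lemma killv_nbQ_mem {q : MvPolynomial (Fin n ⊕ Fin n) k} (hq : q ∈ nbQ k G v) :
    killv (k := k) v q ∈ nbQ k G v := by
  revert hq
  have : nbQ k G v ≤ Ideal.comap (killv (k := k) v) (nbQ k G v) := by
    rw [nbQ, Ideal.span_le]
    rintro f ⟨a, b, ha, hb, hne, rfl⟩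
    have : killv (k := k) v (fb k a b) = fb k a b := killv_fb ha.ne' hb.ne'
    simp only [SetLike.mem_coe, Ideal.mem_comap, this]
    exact Ideal.subset_span ⟨a, b, ha, hb, hne, rfl⟩
  exact fun hq => this hq

lemma sub_killv_nbQ_mem {q : MvPolynomial (Fin n ⊕ Fin n) k} (hq : q ∈ nbQ k G v) :
    q - killv (k := k) v q ∈ binomialEdgeIdeal k G := by
  induction hq using Submodule.span_induction with
  | mem x h =>
    obtain ⟨a, b, ha, hb, _, rfl⟩ := h
    rw [killv_fb ha.ne' hb.ne', sub_self]
    exact zero_mem _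
  | zero => simp
  | add x y hx hy ihx ihy =>
    have : x + y - killv (k := k) v (x + y) = (x - killv v x) + (y - killv v y) := by
      rw [map_add]; ring
    rw [this]; exact add_mem ihx ihy
  | smul a x hx ih =>
    have : a • x - killv (k := k) v (a • x)
        = a * (x - killv v x) + (a - killv v a) * killv v x := by
      rw [smul_eq_mul, map_mul]; ring
    rw [this]
    exact add_mem (Ideal.mul_mem_left _ _ ih)
      (spanxy_mul_nbQ_mem (sub_killv_mem a) (killv_nbQ_mem hx))

lemma J_le_spanxy_sup_delG :
    binomialEdgeIdeal k G ≤ Ideal.span {xv k v, yv k v} ⊔ binomialEdgeIdeal k (delG G v) := by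
  rw [binomialEdgeIdeal, Ideal.span_le]
  rintro f ⟨i, j, hij, rfl⟩
  by_cases hi : i = v
  · subst hi
    refine le_sup_left (α := Ideal (MvPolynomial (Fin n ⊕ Fin n) k)) ?_
    exact Ideal.mem_span_pair.mpr ⟨yv k j, -(xv k j), by unfold fb; ring⟩
  · by_cases hj : j = v
    · subst hj
      refine le_sup_left (α := Ideal (MvPolynomial (Fin n ⊕ Fin n) k)) ?_
      exact Ideal.mem_span_pair.mpr ⟨-(yv k i), xv k i, by unfold fb; ring⟩
    · exact le_sup_right (α := Ideal (MvPolynomial (Fin n ⊕ Fin n) k))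
        (Ideal.subset_span ⟨i, j, ⟨hij, hi, hj⟩, rfl⟩)

lemma killv_spanxy_sup_delG {q : MvPolynomial (Fin n ⊕ Fin n) k}
    (hq : q ∈ Ideal.span {xv k v, yv k v} ⊔ binomialEdgeIdeal k (delG G v)) :
    killv (k := k) v q ∈ binomialEdgeIdeal k (delG G v) := by
  revert hq
  have : Ideal.span {xv k v, yv k v} ⊔ binomialEdgeIdeal k (delG G v)
      ≤ Ideal.comap (killv (k := k) v) (binomialEdgeIdeal k (delG G v)) := by
    refine sup_le ?_ ?_
    · rw [Ideal.span_le]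
      rintro f (rfl | rfl) <;>
        simp only [SetLike.mem_coe, Ideal.mem_comap, killv_xv_self, killv_yv_self] <;>
        exact zero_mem _
    · rw [binomialEdgeIdeal, Ideal.span_le]
      rintro f ⟨i, j, ⟨hij, hi, hj⟩, rfl⟩
      simp only [SetLike.mem_coe, Ideal.mem_comap, killv_fb hi hj]
      exact Ideal.subset_span ⟨i, j, ⟨hij, hi, hj⟩, rfl⟩
  exact fun hq => this hq

/-- Ohtani's key inclusion. -/
lemma ohtani :
    binomialEdgeIdeal k (extG G v) ⊓
      (Ideal.span {xv k v, yv k v} ⊔ binomialEdgeIdeal k (delG G v))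
      ≤ binomialEdgeIdeal k G := by
  rintro g ⟨hg1, hg2⟩
  rw [J_extG_eq] at hg1
  obtain ⟨a, ha, q, hq, rfl⟩ := Submodule.mem_sup.mp hg1
  have haG : a ∈ binomialEdgeIdeal k G := ha
  have hq2 : q ∈ Ideal.span {xv k v, yv k v} ⊔ binomialEdgeIdeal k (delG G v) := by
    have : q = (a + q) - a := by ring
    rw [this]
    exact sub_mem hg2 (J_le_spanxy_sup_delG haG)
  have h1 : killv (k := k) v q ∈ binomialEdgeIdeal k G :=
    J_mono delG_le (killv_spanxy_sup_delG hq2)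
  have h2 : q - killv (k := k) v q ∈ binomialEdgeIdeal k G := sub_killv_nbQ_mem hq
  have : a + q = a + (q - killv (k := k) v q) + killv v q := by ring
  rw [this]
  exact add_mem (add_mem haG h2) h1

end Alg

/-! ### walk pattern and measure -/
section Comb
variable {n : ℕ}

lemma walk_pattern {G : SimpleGraph (Fin n)} :
    ∀ (L : ℕ) {a b : Fin n} (p : G.Walk a b), p.length ≤ L → a ≠ b → ¬G.Adj a b →
      ∃ v u w : Fin n, G.Adj v u ∧ G.Adj v w ∧ u ≠ w ∧ ¬G.Adj u w := by
  intro L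
  induction L with
  | zero =>
    intro a b p hl hne _
    cases p with
    | nil => exact absurd rfl hne
    | cons h q => simp [SimpleGraph.Walk.length_cons] at hl
  | succ L ih =>
    intro a b p hl hne hnadj
    cases p with
    | nil => exact absurd rfl hne
    | @cons _ x _ h q =>
      cases q with
      | nil => exact absurd h hnadj
      | @cons _ y _ h2 r =>
        by_cases hay : a = y
        · subst hay
          exact ih r (by simp [SimpleGraph.Walk.length_cons] at hl ⊢; omega) hne hnadj
        · by_cases haa : G.Adj a y
          · exact ih (SimpleGraph.Walk.cons haa r)
              (by simp [SimpleGraph.Walk.length_cons] at hl ⊢; omega) hne hnadj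
          · exact ⟨x, a, y, h.symm, h2, hay, haa⟩

lemma pattern_or (G : SimpleGraph (Fin n)) :
    (∀ a b : Fin n, G.Reachable a b → a ≠ b → G.Adj a b) ∨
      ∃ v u w : Fin n, G.Adj v u ∧ G.Adj v w ∧ u ≠ w ∧ ¬G.Adj u w := by
  by_cases h : ∀ a b : Fin n, G.Reachable a b → a ≠ b → G.Adj a b
  · exact Or.inl h
  · right
    push_neg at h
    obtain ⟨a, b, hr, hne, hnadj⟩ := h
    obtain ⟨p⟩ := hr
    exact walk_pattern p.length p le_rfl hne hnadj

/-- Set of "missing" pairs: reachable, distinct, non-adjacent. -/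
def misSet (G : SimpleGraph (Fin n)) : Set (Fin n × Fin n) :=
  {p | G.Reachable p.1 p.2 ∧ p.1 ≠ p.2 ∧ ¬G.Adj p.1 p.2}

/-- Set of non-isolated vertices. -/
def nonIso (G : SimpleGraph (Fin n)) : Set (Fin n) := {a | ∃ b, G.Adj a b}

/-- Induction measure. -/
noncomputable def msr (G : SimpleGraph (Fin n)) : ℕ :=
  (nonIso G).ncard * (n * n + 1) + (misSet G).ncard

lemma misSet_ncard_le (G : SimpleGraph (Fin n)) : (misSet G).ncard ≤ n * n := by
  have h1 : (misSet G).ncard ≤ (Set.univ : Set (Fin n × Fin n)).ncard :=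
    Set.ncard_le_ncard (Set.subset_univ _) (Set.toFinite _)
  have h2 : (Set.univ : Set (Fin n × Fin n)).ncard = n * n := by
    rw [Set.ncard_univ, Nat.card_eq_fintype_card, Fintype.card_prod, Fintype.card_fin]
  omega

lemma msr_extG_lt {G : SimpleGraph (Fin n)} {v u w : Fin n}
    (hu : G.Adj v u) (hw : G.Adj v w) (hne : u ≠ w) (hnadj : ¬G.Adj u w) :
    msr (extG G v) < msr G := by
  have hni : nonIso (extG G v) = nonIso G := by
    ext a
    constructor
    · rintro ⟨b, hb | ⟨_, ha, hb⟩⟩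
      · exact ⟨b, hb⟩
      · exact ⟨v, ha.symm⟩
    · rintro ⟨b, hb⟩
      exact ⟨b, Or.inl hb⟩
  have hmis : misSet (extG G v) ⊂ misSet G := by
    constructor
    · rintro ⟨a, b⟩ ⟨hr, hab, hnadj'⟩
      exact ⟨extG_reachable.mp hr, hab, fun h => hnadj' (Or.inl h)⟩
    · intro hsub
      have huw : (u, w) ∈ misSet G :=
        ⟨hu.symm.reachable.trans hw.reachable, hne, hnadj⟩
      have := hsub huw
      exact this.2.2 (Or.inr ⟨hne, hu, hw⟩)
  have := Set.ncard_lt_ncard hmis (Set.toFinite _)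
  unfold msr
  rw [hni]
  omega

lemma msr_delG_lt {G : SimpleGraph (Fin n)} {v u : Fin n} (hu : G.Adj v u) :
    msr (delG G v) < msr G := by
  have hni : nonIso (delG G v) ⊂ nonIso G := by
    constructor
    · rintro a ⟨b, hb, _, _⟩
      exact ⟨b, hb⟩
    · intro hsub
      have : v ∈ nonIso G := ⟨u, hu⟩
      obtain ⟨b, _, hv, _⟩ := hsub this
      exact hv rfl
  have h1 : (nonIso (delG G v)).ncard < (nonIso G).ncard :=
    Set.ncard_lt_ncard hni (Set.toFinite _)
  have h2 := misSet_ncard_le (delG G v)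
  unfold msr
  have h3 : (nonIso (delG G v)).ncard + 1 ≤ (nonIso G).ncard := h1
  calc (nonIso (delG G v)).ncard * (n * n + 1) + (misSet (delG G v)).ncard
      ≤ (nonIso (delG G v)).ncard * (n * n + 1) + (n * n) := by omega
    _ < ((nonIso (delG G v)).ncard + 1) * (n * n + 1) := by ring_nf; omega
    _ ≤ (nonIso G).ncard * (n * n + 1) := Nat.mul_le_mul_right _ h3
    _ ≤ (nonIso G).ncard * (n * n + 1) + (misSet G).ncard := Nat.le_add_right _ _

end Comb

/-! ### pUIdeal lemmas -/
section PU
variable {k : Type*} [Field k] {n : ℕ}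

lemma J_le_pU (G : SimpleGraph (Fin n)) (U : Set (Fin n)) :
    binomialEdgeIdeal k G ≤ pUIdeal k G U := by
  rw [binomialEdgeIdeal, Ideal.span_le]
  rintro f ⟨i, j, hij, rfl⟩
  by_cases hi : i ∈ U
  · have hx : xv k i ∈ pUIdeal k G U :=
      Ideal.subset_span (Or.inl ⟨i, hi, Or.inl rfl⟩)
    have hy : yv k i ∈ pUIdeal k G U :=
      Ideal.subset_span (Or.inl ⟨i, hi, Or.inr rfl⟩)
    have : fb k i j = yv k j * xv k i + (-(xv k j)) * yv k i := by unfold fb; ring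
    rw [SetLike.mem_coe, this]
    exact add_mem (Ideal.mul_mem_left _ _ hx) (Ideal.mul_mem_left _ _ hy)
  · by_cases hj : j ∈ U
    · have hx : xv k j ∈ pUIdeal k G U :=
        Ideal.subset_span (Or.inl ⟨j, hj, Or.inl rfl⟩)
      have hy : yv k j ∈ pUIdeal k G U :=
        Ideal.subset_span (Or.inl ⟨j, hj, Or.inr rfl⟩)
      have : fb k i j = (-(yv k i)) * xv k j + xv k i * yv k j := by unfold fb; ring
      rw [SetLike.mem_coe, this]
      exact add_mem (Ideal.mul_mem_left _ _ hx) (Ideal.mul_mem_left _ _ hy)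
    · refine Ideal.subset_span (Or.inr ⟨i, j, hi, hj, hij.ne, ?_, rfl⟩)
      exact (SimpleGraph.Adj.reachable (by exact hij : (G.induce Uᶜ).Adj ⟨i, hi⟩ ⟨j, hj⟩))

lemma pU_mono_graph {G G' : SimpleGraph (Fin n)} (h : G ≤ G') (U : Set (Fin n)) :
    pUIdeal k G U ≤ pUIdeal k G' U := by
  apply Ideal.span_mono
  rintro f (hf | ⟨u, w, hu, hw, hne, hr, rfl⟩)
  · exact Or.inl hf
  · refine Or.inr ⟨u, w, hu, hw, hne, ?_, rfl⟩
    exact SimpleGraph.Reachable.map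
      (SimpleGraph.induceHom (SimpleGraph.Hom.ofLE h) (fun x hx => hx)) hr

lemma pU_congr {G G' : SimpleGraph (Fin n)} {U : Set (Fin n)}
    (h : G.induce Uᶜ = G'.induce Uᶜ) : pUIdeal k G U = pUIdeal k G' U := by
  unfold pUIdeal
  rw [h]

lemma induce_delG_eq {G : SimpleGraph (Fin n)} {v : Fin n} {U : Set (Fin n)} (hv : v ∈ U) :
    (delG G v).induce Uᶜ = G.induce Uᶜ := by
  ext a b
  simp only [SimpleGraph.comap_adj, Function.Embedding.coe_subtype]
  constructor
  · rintro ⟨h, _, _⟩; exact h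
  · intro h
    refine ⟨h, fun h' => a.2 (h' ▸ hv), fun h' => b.2 (h' ▸ hv)⟩

lemma pU_insert_le_comap (H : SimpleGraph (Fin n)) (v : Fin n) (U : Set (Fin n)) :
    pUIdeal k H (insert v U) ≤
      Ideal.comap (killv (k := k) v) (pUIdeal k H U) := by
  rw [pUIdeal, Ideal.span_le]
  rintro f (⟨i, hi, hf⟩ | ⟨a, b, ha, hb, hne, hr, rfl⟩)
  · by_cases hiv : i = v
    · subst hiv
      rcases hf with rfl | rfl <;>
        simp only [SetLike.mem_coe, Ideal.mem_comap, killv_xv_self, killv_yv_self] <;>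
        exact zero_mem _
    · have hiU : i ∈ U := by
        rcases Set.mem_insert_iff.mp hi with h | h
        · exact absurd h hiv
        · exact h
      rcases hf with rfl | rfl
      · simp only [SetLike.mem_coe, Ideal.mem_comap, killv_xv hiv]
        exact Ideal.subset_span (Or.inl ⟨i, hiU, Or.inl rfl⟩)
      · simp only [SetLike.mem_coe, Ideal.mem_comap, killv_yv hiv]
        exact Ideal.subset_span (Or.inl ⟨i, hiU, Or.inr rfl⟩)
  · have hav : a ≠ v := fun h => ha (h ▸ Set.mem_insert v U)
    have hbv : b ≠ v := fun h => hb (h ▸ Set.mem_insert v U)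
    have ha' : a ∈ Uᶜ := fun h => ha (Set.mem_insert_of_mem v h)
    have hb' : b ∈ Uᶜ := fun h => hb (Set.mem_insert_of_mem v h)
    have hsub : (insert v U)ᶜ ≤ Uᶜ :=
      Set.compl_subset_compl.mpr (Set.subset_insert v U)
    have hr' : (H.induce Uᶜ).Reachable ⟨a, ha'⟩ ⟨b, hb'⟩ :=
      hr.map (H.induceHomOfLE hsub).toHom
    simp only [SetLike.mem_coe, Ideal.mem_comap, killv_fb hav hbv]
    exact Ideal.subset_span (Or.inr ⟨a, b, ha', hb', hne, hr', rfl⟩)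

lemma pU_empty_le {G : SimpleGraph (Fin n)}
    (hall : ∀ a b : Fin n, G.Reachable a b → a ≠ b → G.Adj a b) :
    pUIdeal k G (∅ : Set (Fin n)) ≤ binomialEdgeIdeal k G := by
  rw [pUIdeal, Ideal.span_le]
  rintro f (⟨i, hi, _⟩ | ⟨u, w, hu, hw, hne, hr, rfl⟩)
  · exact absurd hi (Set.notMem_empty i)
  · have hr' : G.Reachable u w := hr.map (SimpleGraph.Embedding.induce _).toHom
    exact Ideal.subset_span ⟨u, w, hall u w hr' hne, rfl⟩

lemma comap_iInf_pU {φ : MvPolynomial (Fin n ⊕ Fin n) k →ₐ[k] MvPolynomial (Fin n ⊕ Fin n) k}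
    {P : Set (Fin n) → Ideal (MvPolynomial (Fin n ⊕ Fin n) k)} :
    (⨅ U : Set (Fin n), Ideal.comap φ (P U)) = Ideal.comap φ (⨅ U : Set (Fin n), P U) := by
  ext x
  simp [Ideal.mem_comap, Ideal.mem_iInf]

/-! ### Main induction -/

lemma main_aux : ∀ (N : ℕ) (G : SimpleGraph (Fin n)), msr G ≤ N →
    (⨅ U : Set (Fin n), pUIdeal k G U) ≤ binomialEdgeIdeal k G := by
  intro N
  induction N using Nat.strong_induction_on with
  | _ N ih =>
    intro G hN
    rcases pattern_or G with hall | ⟨v, u, w, hvu, hvw, hne, hnadj⟩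
    · exact le_trans (iInf_le _ (∅ : Set (Fin n))) (pU_empty_le hall)
    · set I := ⨅ U : Set (Fin n), pUIdeal k G U with hI
      -- Step 1 : I ≤ J_{extG}
      have hmsr1 : msr (extG G v) < N := lt_of_lt_of_le (msr_extG_lt hvu hvw hne hnadj) hN
      have step1 : I ≤ binomialEdgeIdeal k (extG G v) := by
        have : I ≤ ⨅ U : Set (Fin n), pUIdeal k (extG G v) U :=
          le_iInf fun U => le_trans (iInf_le _ U) (pU_mono_graph le_extG U)
        exact le_trans this (ih _ hmsr1 _ le_rfl)
      -- Step 2 : I ≤ span{x_v,y_v} ⊔ J_{delG}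
      have hmsr2 : msr (delG G v) < N := lt_of_lt_of_le (msr_delG_lt hvu) hN
      have step2 : I ≤ Ideal.span {xv k v, yv k v} ⊔ binomialEdgeIdeal k (delG G v) := by
        have hstep : ∀ U : Set (Fin n),
            I ≤ Ideal.comap (killv (k := k) v) (pUIdeal k (delG G v) U) := by
          intro U
          have e1 : pUIdeal k G (insert v U) = pUIdeal k (delG G v) (insert v U) :=
            (pU_congr (induce_delG_eq (Set.mem_insert v U))).symm
          calc I ≤ pUIdeal k G (insert v U) := iInf_le _ _
            _ = pUIdeal k (delG G v) (insert v U) := e1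
            _ ≤ Ideal.comap (killv (k := k) v) (pUIdeal k (delG G v) U) :=
                pU_insert_le_comap _ v U
        have h2 : I ≤ Ideal.comap (killv (k := k) v)
            (⨅ U : Set (Fin n), pUIdeal k (delG G v) U) := by
          rw [← comap_iInf_pU]
          exact le_iInf hstep
        have h3 : I ≤ Ideal.comap (killv (k := k) v) (binomialEdgeIdeal k (delG G v)) :=
          le_trans h2 (Ideal.comap_mono (ih _ hmsr2 _ le_rfl))
        intro f hf
        have hkf : killv (k := k) v f ∈ binomialEdgeIdeal k (delG G v) := h3 hf
        have : f = (f - killv (k := k) v f) + killv v f := by ring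
        rw [this]
        exact add_mem (le_sup_left (α := Ideal (MvPolynomial (Fin n ⊕ Fin n) k))
          (sub_killv_mem f)) (le_sup_right (α := Ideal (MvPolynomial (Fin n ⊕ Fin n) k)) hkf)
      exact le_trans (le_inf step1 step2) ohtani

end PU


/-- For any finite simple graph `G` on `{1,…,n}`, the binomial edge
ideal is the intersection of the prime ideals `p_U(G)` over all `U ⊆ {1,…,n}`. -/
theorem binomialEdgeIdeal_eq_iInf_pUIdeal
    {k : Type*} [Field k] {n : ℕ} (G : SimpleGraph (Fin n)) :
    binomialEdgeIdeal k G = ⨅ U : Set (Fin n), pUIdeal k G U :=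
  le_antisymm (le_iInf fun U => J_le_pU G U) (main_aux (msr G) G le_rfl)
end
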